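/- Let X and Y be finite sets and F : X × Y → ℝ a function with F(x,y) > 0 for all x, y. Write F₁(x) := Σ_{y∈Y} F(x,y) and G(x,z) := Σ_{y∈Y} F(x,y)·ln(F(z,y)). If x, x' ∈ X satisfy G(x,x') ≥ G(x,x), then F₁(x') ≥ F₁(x). -/
import Mathlib

/-- The sum-increase lemma: if the auxiliary expectation
`G(x,z) = Σ_y F(x,y)·ln(F(z,y))` satisfies `G(x,x') ≥ G(x,x)`, then
`F₁(x') = Σ_y F(x',y) ≥ Σ_y F(x,y) = F₁(x)`. -/
theorem sum_increase_lemma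
    {X Y : Type*} [Fintype X] [Fintype Y] (F : X → Y → ℝ)
    (hF : ∀ x y, 0 < F x y) (x x' : X)
    (h : ∑ y, F x y * Real.log (F x y) ≤ ∑ y, F x y * Real.log (F x' y)) :
    ∑ y, F x y ≤ ∑ y, F x' y := by
  have key : ∀ y, F x y * Real.log (F x' y) - F x y * Real.log (F x y) ≤ F x' y - F x y := by
    intro y
    have h1 : F x y * Real.log (F x' y) - F x y * Real.log (F x y)
        = F x y * Real.log (F x' y / F x y) := by
      rw [Real.log_div (hF x' y).ne' (hF x y).ne']; ring
    rw [h1]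
    have h2 := Real.log_le_sub_one_of_pos (div_pos (hF x' y) (hF x y))
    calc F x y * Real.log (F x' y / F x y) ≤ F x y * (F x' y / F x y - 1) :=
          mul_le_mul_of_nonneg_left h2 (hF x y).le
      _ = F x' y - F x y := by field_simp [(hF x y).ne']
  have hsum := Finset.sum_le_sum (s := Finset.univ) (fun y _ => key y)
  rw [Finset.sum_sub_distrib, Finset.sum_sub_distrib] at hsum
  linarith
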